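/- The matrix K₁ (the trace-Kerdock matrix for α = 1) is invertible over ℤ₂; writing J = K₁⁻¹, the map x ↦ K_x·J from 𝔽(2ⁿ) to n×n matrices over ℤ₂ is an injective ring homomorphism: K_{x+y}·J = K_x·J + K_y·J, (K_x·J)·(K_y·J) = K_{xy}·J for all x, y ∈ 𝔽(2ⁿ), and K₁·J is the identity matrix. -/

import Mathlib

open Matrix Polynomial

private lemma zmod2_pow_pow (c : ZMod 2) (i : ℕ) : c ^ (2 ^ i) = c := by
  induction i with
  | zero => simp
  | succ m ih => rw [pow_succ, pow_mul, ih]; exact ZMod.pow_card c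

theorem stmt_5 (n : ℕ) (hn : 1 ≤ n) (h : Polynomial (ZMod 2))
    (hmonic : h.Monic) (hdeg : h.natDegree = n) (hirr : Irreducible h)
    (hprim : orderOf (AdjoinRoot.root h) = 2 ^ n - 1)
    (K : AdjoinRoot h → Matrix (Fin n) (Fin n) (ZMod 2))
    (hK : ∀ (x : AdjoinRoot h) (j k : Fin n),
        algebraMap (ZMod 2) (AdjoinRoot h) (K x j k)
          = ∑ i ∈ Finset.range n, (x * (AdjoinRoot.root h) ^ ((j : ℕ) + (k : ℕ))) ^ (2 ^ i)) :
    IsUnit (K 1)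
    ∧ K 1 * (K 1)⁻¹ = 1
    ∧ (∀ x y : AdjoinRoot h, K (x + y) * (K 1)⁻¹ = K x * (K 1)⁻¹ + K y * (K 1)⁻¹)
    ∧ (∀ x y : AdjoinRoot h, (K x * (K 1)⁻¹) * (K y * (K 1)⁻¹) = K (x * y) * (K 1)⁻¹)
    ∧ Function.Injective (fun x : AdjoinRoot h => K x * (K 1)⁻¹) := by
  classical
  haveI : Fact (Irreducible h) := ⟨hirr⟩
  have hinj : Function.Injective (algebraMap (ZMod 2) (AdjoinRoot h)) :=
    (algebraMap (ZMod 2) (AdjoinRoot h)).injective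
  haveI : CharP (AdjoinRoot h) 2 := charP_of_injective_algebraMap hinj 2
  -- power basis
  let pb := AdjoinRoot.powerBasis' hmonic
  let e : Fin h.natDegree ≃ Fin n := finCongr hdeg
  let b : Module.Basis (Fin n) (ZMod 2) (AdjoinRoot h) := pb.basis.reindex e
  have hb : ∀ i : Fin n, b i = (AdjoinRoot.root h) ^ (i : ℕ) := by
    intro i
    erw [Module.Basis.reindex_apply, pb.basis_eq_pow]
    simp [e, pb, AdjoinRoot.powerBasis'_gen]
    rfl
  haveI : Fintype (AdjoinRoot h) := Module.fintypeOfFintype b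
  have hcard : Fintype.card (AdjoinRoot h) = 2 ^ n := by
    rw [Module.card_fintype b, ZMod.card, Fintype.card_fin]
  -- the trace-like map
  let T : AdjoinRoot h → AdjoinRoot h := fun z => ∑ i ∈ Finset.range n, z ^ (2 ^ i)
  have hKT : ∀ (x : AdjoinRoot h) (j k : Fin n),
      algebraMap (ZMod 2) (AdjoinRoot h) (K x j k)
        = T (x * (AdjoinRoot.root h) ^ ((j : ℕ) + (k : ℕ))) := fun x j k => hK x j k
  have Tadd : ∀ a c : AdjoinRoot h, T (a + c) = T a + T c := by
    intro a c
    simp only [T, ← Finset.sum_add_distrib]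
    exact Finset.sum_congr rfl fun i _ => add_pow_char_pow ..
  have Tsmul : ∀ (c : ZMod 2) (z : AdjoinRoot h), T (c • z) = c • T z := by
    intro c z
    simp only [T, Algebra.smul_def, Finset.mul_sum]
    refine Finset.sum_congr rfl fun i _ => ?_
    rw [mul_pow, ← map_pow, zmod2_pow_pow]
  let TL : AdjoinRoot h →ₗ[ZMod 2] AdjoinRoot h :=
    ⟨⟨T, fun a c => Tadd a c⟩, fun c z => Tsmul c z⟩
  -- the multiplication matrices
  let M : AdjoinRoot h → Matrix (Fin n) (Fin n) (ZMod 2) :=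
    fun x => LinearMap.toMatrix b b (Algebra.lmul (ZMod 2) (AdjoinRoot h) x)
  have hmul : ∀ (x : AdjoinRoot h) (j : Fin n),
      x * (AdjoinRoot.root h) ^ (j : ℕ) = ∑ i, M x i j • (AdjoinRoot.root h) ^ (i : ℕ) := by
    intro x j
    have h0 : (Algebra.lmul (ZMod 2) (AdjoinRoot h) x) (b j)
        = x * (AdjoinRoot.root h) ^ (j : ℕ) := by rw [hb]; rfl
    have hs := b.sum_repr (x * (AdjoinRoot.root h) ^ (j : ℕ))
    rw [← hs]
    refine Finset.sum_congr rfl fun i _ => ?_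
    rw [hb i]
    congr 1
    simp only [M, LinearMap.toMatrix_apply, h0]
  -- the key factorization K x = (M x)ᵀ * K 1
  have hKM : ∀ x : AdjoinRoot h, K x = (M x)ᵀ * K 1 := by
    intro x
    ext j k
    apply hinj
    rw [hKT, mul_apply]
    have h1 : x * (AdjoinRoot.root h) ^ ((j : ℕ) + (k : ℕ))
        = ∑ i, M x i j • ((AdjoinRoot.root h) ^ ((i : ℕ) + (k : ℕ))) := by
      rw [pow_add, ← mul_assoc, hmul x j, Finset.sum_mul]
      refine Finset.sum_congr rfl fun i _ => ?_
      rw [smul_mul_assoc, pow_add]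
    rw [h1]
    have h2 : T (∑ i, M x i j • ((AdjoinRoot.root h) ^ ((i : ℕ) + (k : ℕ))))
        = ∑ i, M x i j • T ((AdjoinRoot.root h) ^ ((i : ℕ) + (k : ℕ))) :=
      (map_sum TL _ _).trans (Finset.sum_congr rfl fun i _ => TL.map_smul _ _)
    rw [h2, map_sum]
    refine Finset.sum_congr rfl fun i _ => ?_
    rw [transpose_apply, _root_.map_mul]
    have h3 : T ((AdjoinRoot.root h) ^ ((i : ℕ) + (k : ℕ)))
        = algebraMap (ZMod 2) (AdjoinRoot h) (K 1 i k) := by rw [hKT 1 i k, one_mul]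
    rw [Algebra.smul_def, h3]
  -- K 1 has nonzero determinant
  have hdet : IsUnit (K 1).det := by
    rw [isUnit_iff_ne_zero]
    intro hd
    obtain ⟨v, hv0, hv⟩ := (Matrix.exists_mulVec_eq_zero_iff).mpr hd
    set a : AdjoinRoot h := ∑ k, v k • (AdjoinRoot.root h) ^ (k : ℕ) with ha
    have hane : a ≠ 0 := by
      intro h0
      apply hv0
      have hsum : ∑ k, v k • b k = 0 := by
        rw [ha] at h0
        rw [← h0]
        exact Finset.sum_congr rfl fun k _ => by rw [hb]
      have hli := b.linearIndependent
      rw [linearIndependent_iff'] at hli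
      ext k
      exact hli Finset.univ v hsum k (Finset.mem_univ k)
    have hTa : ∀ j : Fin n, T ((AdjoinRoot.root h) ^ (j : ℕ) * a) = 0 := by
      intro j
      have hvj : algebraMap (ZMod 2) (AdjoinRoot h) ((K 1).mulVec v j) = 0 := by
        rw [congrFun hv j]; simp
      rw [mulVec, dotProduct, map_sum] at hvj
      rw [ha, Finset.mul_sum]
      calc T (∑ k, (AdjoinRoot.root h) ^ (j : ℕ) * (v k • (AdjoinRoot.root h) ^ (k : ℕ)))
          = ∑ k, T ((AdjoinRoot.root h) ^ (j : ℕ) * (v k • (AdjoinRoot.root h) ^ (k : ℕ))) :=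
            map_sum TL _ _
        _ = ∑ k, algebraMap (ZMod 2) (AdjoinRoot h) (K 1 j k * v k) := by
            refine Finset.sum_congr rfl fun k _ => ?_
            rw [mul_smul_comm, Tsmul]
            show (v k) • T ((AdjoinRoot.root h) ^ (j : ℕ) * (AdjoinRoot.root h) ^ (k : ℕ)) = _
            rw [← pow_add, ← one_mul ((AdjoinRoot.root h) ^ ((j : ℕ) + (k : ℕ))), ← hKT 1 j k,
              _root_.map_mul, Algebra.smul_def, mul_comm]
        _ = 0 := hvj
    have hTall : ∀ z : AdjoinRoot h, T z = 0 := by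
      intro z
      have key : ∀ y : AdjoinRoot h, T (y * a) = 0 := by
        intro y
        have hy : y ∈ Submodule.span (ZMod 2) (Set.range b) := by rw [b.span_eq]; trivial
        induction hy using Submodule.span_induction with
        | mem w hw =>
            obtain ⟨j, rfl⟩ := hw
            rw [hb]; exact hTa j
        | zero => rw [zero_mul]; exact map_zero TL
        | add u w _ _ hu hw => rw [add_mul, Tadd, hu, hw, add_zero]
        | smul c u _ hu => rw [smul_mul_assoc, Tsmul, hu, smul_zero]
      have hz := key (z * a⁻¹)
      rwa [mul_assoc, inv_mul_cancel₀ hane, mul_one] at hz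
    -- polynomial contradiction
    set P : Polynomial (AdjoinRoot h) := ∑ i ∈ Finset.range n, X ^ (2 ^ i) with hP
    have hPeval : ∀ z : AdjoinRoot h, P.eval z = 0 := by
      intro z
      rw [hP]
      simpa [eval_finset_sum] using hTall z
    have hPdeg : P.natDegree < Fintype.card (AdjoinRoot h) := by
      rw [hcard]
      refine lt_of_le_of_lt (natDegree_sum_le_of_forall_le _ _ fun i hi => ?_)
        (Nat.pow_lt_pow_right one_lt_two (Nat.sub_lt hn one_pos))
      rw [natDegree_X_pow]
      exact Nat.pow_le_pow_right (by norm_num) (by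
        have := Finset.mem_range.mp hi; omega)
    have hP0 : P = 0 :=
      Polynomial.eq_zero_of_natDegree_lt_card_of_eval_eq_zero P Function.injective_id
        (fun z => hPeval z) hPdeg
    have hc1 : P.coeff 1 = 1 := by
      rw [hP, finset_sum_coeff, Finset.sum_eq_single 0]
      · simp
      · intro i hi hne
        rw [coeff_X_pow]
        have h21 : (2:ℕ) ^ i ≠ 1 := by
          have := Nat.one_lt_two_pow (n := i) (by omega)
          omega
        simp [Ne.symm h21]
      · intro h0
        exact absurd (Finset.mem_range.mpr (by omega)) h0
    rw [hP0] at hc1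
    simp at hc1
  have hunit : IsUnit (K 1) := (Matrix.isUnit_iff_isUnit_det _).mpr hdet
  have hKinv : K 1 * (K 1)⁻¹ = 1 := Matrix.mul_nonsing_inv _ hdet
  have hKJ : ∀ x : AdjoinRoot h, K x * (K 1)⁻¹ = (M x)ᵀ := by
    intro x
    rw [hKM x, mul_assoc, hKinv, mul_one]
  have hKadd : ∀ x y : AdjoinRoot h, K (x + y) = K x + K y := by
    intro x y
    ext j k
    apply hinj
    rw [Matrix.add_apply, map_add, hKT, hKT, hKT, add_mul, Tadd]
  have hMmul : ∀ x y : AdjoinRoot h, M y * M x = M (x * y) := by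
    intro x y
    simp only [M]
    rw [← LinearMap.toMatrix_mul, ← _root_.map_mul, mul_comm y x]
  have hMinj : Function.Injective M := by
    intro x y hxy
    have h1 := (LinearMap.toMatrix b b).injective hxy
    have h2 : Algebra.lmul (ZMod 2) (AdjoinRoot h) x 1
        = Algebra.lmul (ZMod 2) (AdjoinRoot h) y 1 := by rw [h1]
    simpa using h2
  refine ⟨hunit, hKinv, ?_, ?_, ?_⟩
  · intro x y
    rw [hKadd, add_mul]
  · intro x y
    rw [hKJ, hKJ, hKJ, ← transpose_mul, hMmul]
  · intro x y hxy
    simp only [hKJ] at hxy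
    exact hMinj (by simpa using congrArg Matrix.transpose hxy)
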